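/- Forward direction of the Partition reduction: fix f ∈ (0,1), positive reals a_1, …, a_n with t = (1/2)·Σ_i a_i and a_i ≤ t for all i, and consider the constant product CFMM F_y(x) = k/x with initial state s0 = (x0, y0), x0 = (1−f)t/(1−√(1−f)), y0 = k/x0, and prices with r(x0) = p_x/p_y (so that x0 − L_x = (1−f)t). Let the users' transactions be TX^i = Sell(X, a_i) for i ∈ [n] and TX^{n+1} = TX^{n+2} = Sell(Y, q*) with q* large enough that F_x(y0 + (1−f)q*) < L_x. If there exists S ⊆ [n] with Σ_{i∈S} a_i = t, then the sequence consisting of: TX^{n+1}; the miner's transaction Sell(X, (L_x − F_x(y0 + (1−f)q*))/(1−f)); the transactions TX^i for i ∈ S (in any order); TX^{n+2}; and the miner's transaction Sell(X, (L_x − F_x(y0 + (1−f)q*))/(1−f)) again, satisfies the greedy sequencing rule and yields miner total profit exactly 2·AP(s0, Sell(Y, q*)) = M(s0, {TX^i}_{i∈[n+2]}). -/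

import Mathlib

/-- A transaction in the two-token CFMM: sell `q` units of token X or of token Y. -/
inductive Tx where
  | sellX (q : ℝ)
  | sellY (q : ℝ)

namespace Tx

/-- The transaction is of type `Sell(X, ·)`. -/
def isSellX : Tx → Prop
  | sellX _ => True
  | sellY _ => False

/-- The transaction is of type `Sell(Y, ·)`. -/
def isSellY : Tx → Prop
  | sellX _ => False
  | sellY _ => True

end Tx

/-- Executing a transaction at the state `(x, Fy x)` with fee fraction `f`:
the new `X`-reserve. -/
noncomputable def step (Fy Fx : ℝ → ℝ) (f : ℝ) (x : ℝ) : Tx → ℝ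
  | Tx.sellX q => x + (1 - f) * q
  | Tx.sellY q => Fx (Fy x + (1 - f) * q)

/-- Profit that a miner gains by executing one transaction at state `(x, Fy x)`. -/
noncomputable def txProfit (Fy Fx : ℝ → ℝ) (f px py : ℝ) (x : ℝ) : Tx → ℝ
  | Tx.sellX q => (Fy x - Fy (x + (1 - f) * q)) * py - q * px
  | Tx.sellY q => (x - Fx (Fy x + (1 - f) * q)) * px - q * py

/-- Miner's total profit along a tagged sequence (`true` = miner's transaction). -/
noncomputable def minerProfit (Fy Fx : ℝ → ℝ) (f px py : ℝ) : ℝ → List (Tx × Bool) → ℝ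
  | _, [] => 0
  | x, t :: rest =>
      (if t.2 then txProfit Fy Fx f px py x t.1 else 0) +
        minerProfit Fy Fx f px py (step Fy Fx f x t.1) rest

/-- The greedy sequencing rule for a tagged sequence with benchmark state `(x0, y0)`. -/
def GSR (Fy Fx : ℝ → ℝ) (f x0 y0 : ℝ) : ℝ → List (Tx × Bool) → Prop
  | _, [] => True
  | x, (Tx.sellX q, _) :: rest =>
      (x ≤ x0 ∨ ∀ t ∈ rest, (t : Tx × Bool).1.isSellX) ∧
        GSR Fy Fx f x0 y0 (x + (1 - f) * q) rest
  | x, (Tx.sellY q, _) :: rest =>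
      (Fy x ≤ y0 ∨ ∀ t ∈ rest, (t : Tx × Bool).1.isSellY) ∧
        GSR Fy Fx f x0 y0 (Fx (Fy x + (1 - f) * q)) rest

/-- Arbitragable profit of a transaction at the initial state `(x0, Fy x0)`. -/
noncomputable def AP (Fy Fx : ℝ → ℝ) (f px py Lx Rx x0 : ℝ) : Tx → ℝ
  | Tx.sellX q =>
      (max (x0 + (1 - f) * q) Rx - Rx) * px -
        ((Fy Rx - Fy (max (x0 + (1 - f) * q) Rx)) / (1 - f)) * py
  | Tx.sellY q =>
      (Fy (min (Fx (Fy x0 + (1 - f) * q)) Lx) - Fy Lx) * py -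
        ((Lx - min (Fx (Fy x0 + (1 - f) * q)) Lx) / (1 - f)) * px

lemma minerProfit_sellX_append (Fy Fx : ℝ → ℝ) (f px py : ℝ) :
    ∀ (L : List ℝ) (x : ℝ) (tail : List (Tx × Bool)),
    minerProfit Fy Fx f px py x ((L.map fun b => (Tx.sellX b, false)) ++ tail) =
      minerProfit Fy Fx f px py (x + (1 - f) * L.sum) tail := by
  intro L
  induction L with
  | nil => intro x tail; simp [minerProfit]
  | cons b L ih =>
      intro x tail
      simp only [List.map_cons, List.cons_append, minerProfit, step, List.sum_cons,
        List.append_eq,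
        if_neg (by simp : ¬ ((Tx.sellX b, false) : Tx × Bool).2 = true)]
      rw [ih, zero_add]
      congr 1
      ring

lemma gsr_sellX_append (Fy Fx : ℝ → ℝ) (f x0 y0 : ℝ) (hf : 0 ≤ 1 - f) :
    ∀ (L : List ℝ) (x : ℝ) (tail : List (Tx × Bool)),
    (∀ b ∈ L, 0 ≤ b) → x + (1 - f) * L.sum ≤ x0 →
    GSR Fy Fx f x0 y0 (x + (1 - f) * L.sum) tail →
    GSR Fy Fx f x0 y0 x ((L.map fun b => (Tx.sellX b, false)) ++ tail) := by
  intro L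
  induction L with
  | nil => intro x tail _ _ h; simpa using h
  | cons b L ih =>
      intro x tail hpos hle hg
      have hs : 0 ≤ L.sum := List.sum_nonneg (fun c hc => hpos c (List.mem_cons_of_mem _ hc))
      have hb : 0 ≤ b := hpos b List.mem_cons_self
      have hsum : x + (1 - f) * b + (1 - f) * L.sum = x + (1 - f) * (b :: L).sum := by
        simp [List.sum_cons]; ring
      simp only [List.map_cons, List.cons_append, GSR]
      constructor
      · left
        rw [List.sum_cons] at hle
        nlinarith
      · apply ih
        · exact fun c hc => hpos c (List.mem_cons_of_mem _ hc)
        · rw [hsum]; exact hle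
        · rw [hsum]; exact hg

set_option maxHeartbeats 1000000 in
/-- **forward direction of the Partition reduction.**
Fix `f ∈ (0,1)` and positive reals `a_1, …, a_n` with `t = (1/2)·Σ_i a_i` and `a_i ≤ t`,
and consider the constant product CFMM `F_y(x) = k/x` with initial state `s0 = (x0, y0)`,
`x0 = (1−f)t/(1−√(1−f))`, `y0 = k/x0`, and prices with `r(x0) = p_x/p_y` (so that
`x0 − L_x = (1−f)t`). The users' transactions are `Sell(X, a_i)` for `i ∈ [n]` and two
copies of `Sell(Y, q*)` with `q*` large enough that `F_x(y0 + (1−f)q*) < L_x`. If there is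
`S ⊆ [n]` with `Σ_{i∈S} a_i = t` (here: a duplicate-free list `l` of indices whose amounts
sum to `t`), then the sequence `TX^{n+1}`; miner's `Sell(X, (L_x − F_x(y0+(1−f)q*))/(1−f))`;
the `TX^i`, `i ∈ S` (in any order); `TX^{n+2}`; the same miner transaction again —
satisfies the greedy sequencing rule and yields miner total profit exactly
`2·AP(s0, Sell(Y,q*)) = M(s0, {TX^i}_{i∈[n+2]})`. -/
theorem partition_reduction_forward
    (f k px py t x0 y0 Lx Rx qstar : ℝ) (n : ℕ) (a : Fin n → ℝ)
    (hf0 : 0 < f) (hf1 : f < 1)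
    (hk : 0 < k)
    (hpx : 0 < px) (hpy : 0 < py)
    (ha_pos : ∀ i, 0 < a i)
    (ht : t = (1 / 2) * ∑ i, a i)
    (ha_le : ∀ i, a i ≤ t)
    (hx0 : x0 = (1 - f) * t / (1 - Real.sqrt (1 - f)))
    (hy0 : y0 = k / x0)
    (hprice : k / x0 ^ 2 = px / py)
    (hLx_pos : 0 < Lx) (hLx : k / Lx ^ 2 = (1 / (1 - f)) * (px / py))
    (hRx_pos : 0 < Rx) (hRx : k / Rx ^ 2 = (1 - f) * (px / py))
    (hqstar_nonneg : 0 ≤ qstar)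
    (hqstar : k / (y0 + (1 - f) * qstar) < Lx)
    -- a subset of `[n]` (as a duplicate-free list, fixing an arbitrary order)
    (l : List (Fin n)) (hl_nodup : l.Nodup) (hl_sum : (l.map a).sum = t) :
    GSR (fun x => k / x) (fun y => k / y) f x0 y0 x0
        ((Tx.sellY qstar, false) ::
          (Tx.sellX ((Lx - k / (y0 + (1 - f) * qstar)) / (1 - f)), true) ::
          (l.map fun i => (Tx.sellX (a i), false)) ++
          [(Tx.sellY qstar, false),
            (Tx.sellX ((Lx - k / (y0 + (1 - f) * qstar)) / (1 - f)), true)]) ∧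
      minerProfit (fun x => k / x) (fun y => k / y) f px py x0
        ((Tx.sellY qstar, false) ::
          (Tx.sellX ((Lx - k / (y0 + (1 - f) * qstar)) / (1 - f)), true) ::
          (l.map fun i => (Tx.sellX (a i), false)) ++
          [(Tx.sellY qstar, false),
            (Tx.sellX ((Lx - k / (y0 + (1 - f) * qstar)) / (1 - f)), true)]) =
        2 * AP (fun x => k / x) (fun y => k / y) f px py Lx Rx x0 (Tx.sellY qstar) ∧
      ((List.ofFn (fun i => Tx.sellX (a i)) ++ [Tx.sellY qstar, Tx.sellY qstar]).map
          (AP (fun x => k / x) (fun y => k / y) f px py Lx Rx x0)).sum =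
        2 * AP (fun x => k / x) (fun y => k / y) f px py Lx Rx x0 (Tx.sellY qstar) := by
  have h1f : (0:ℝ) < 1 - f := by linarith
  set g := Real.sqrt (1 - f) with hg_def
  have hg2 : g ^ 2 = 1 - f := Real.sq_sqrt h1f.le
  have hg0 : 0 < g := Real.sqrt_pos.mpr h1f
  have hg1 : g < 1 := by nlinarith
  have h1g : (0:ℝ) < 1 - g := by linarith
  have ht0 : 0 ≤ t := by
    have : 0 ≤ ∑ i, a i := Finset.sum_nonneg fun i _ => (ha_pos i).le
    rw [ht]; linarith
  have hpxy : 0 < px / py := div_pos hpx hpy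
  have hx0ne : x0 ≠ 0 := by
    intro h
    rw [h] at hprice
    norm_num at hprice
    rw [← hprice] at hpxy
    exact lt_irrefl _ hpxy
  have hx0nn : 0 ≤ x0 := by
    rw [hx0]
    exact div_nonneg (mul_nonneg h1f.le ht0) h1g.le
  have hx00 : 0 < x0 := lt_of_le_of_ne hx0nn (Ne.symm hx0ne)
  have key : x0 * (1 - g) = (1 - f) * t := by
    rw [hx0]; field_simp
  have ht_pos : 0 < t := by nlinarith
  have hk' : k ≠ 0 := hk.ne'
  -- Lx = g * x0
  have hLx2 : Lx ^ 2 = (1 - f) * x0 ^ 2 := by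
    rw [← hprice] at hLx
    have hLxne : Lx ≠ 0 := hLx_pos.ne'
    field_simp at hLx
    exact hLx.symm
  have hLx_eq : Lx = g * x0 := by
    have h1 : (Lx - g * x0) * (Lx + g * x0) = 0 := by
      have : (g * x0) ^ 2 = (1 - f) * x0 ^ 2 := by rw [mul_pow, hg2]
      linear_combination hLx2 - this
    rcases mul_eq_zero.mp h1 with h | h
    · linarith
    · nlinarith [mul_pos hg0 hx00]
  have hLxv : Lx = x0 - (1 - f) * t := by linear_combination hLx_eq - key
  -- Rx = x0 + g * t
  have hRx2 : (1 - f) * Rx ^ 2 = x0 ^ 2 := by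
    rw [← hprice] at hRx
    have hRxne : Rx ≠ 0 := hRx_pos.ne'
    field_simp at hRx
    have h2 : k * ((1 - f) * Rx ^ 2) = k * x0 ^ 2 := by linear_combination (-k) * hRx
    exact mul_left_cancel₀ hk' h2
  have hgRx : g * Rx = x0 := by
    have h1 : (g * Rx - x0) * (g * Rx + x0) = 0 := by
      have : (g * Rx) ^ 2 = (1 - f) * Rx ^ 2 := by rw [mul_pow, hg2]
      linear_combination this + hRx2
    rcases mul_eq_zero.mp h1 with h | h
    · linarith
    · nlinarith [mul_pos hg0 hRx_pos]
  have hRxv : Rx = x0 + g * t := by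
    have h3 : g * (x0 + g * t) = x0 := by linear_combination t * hg2 - key
    exact mul_left_cancel₀ hg0.ne' (hgRx.trans h3.symm)
  have hy0pos : 0 < y0 := by rw [hy0]; positivity
  have hd0 : 0 < y0 + (1 - f) * qstar :=
    add_pos_of_pos_of_nonneg hy0pos (mul_nonneg h1f.le hqstar_nonneg)
  set x1 := k / (y0 + (1 - f) * qstar) with hx1_def
  have hx10 : 0 < x1 := div_pos hk hd0
  have hx1Lx : x1 < Lx := hqstar
  have hLxx0 : Lx < x0 := by
    have := mul_pos h1f ht_pos
    linarith
  set qm := (Lx - x1) / (1 - f) with hqm_def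
  have hstep2 : x1 + (1 - f) * qm = Lx := by
    rw [hqm_def]; field_simp; ring
  have hx0y : k / x0 = y0 := hy0.symm
  have hLxt : Lx + (1 - f) * t = x0 := by linarith
  have hmap : (l.map fun i => (Tx.sellX (a i), false)) =
      ((l.map a).map fun b => (Tx.sellX b, false)) := by
    simp [List.map_map, Function.comp]
  refine ⟨?_, ?_, ?_⟩
  · -- GSR
    simp only [List.cons_append, hmap, GSR]
    refine ⟨Or.inl (le_of_eq hx0y), Or.inl ?_, ?_⟩
    · rw [hx0y, ← hx1_def]
      linarith
    · rw [hx0y, ← hx1_def, hstep2]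
      apply gsr_sellX_append _ _ _ _ _ h1f.le
      · intro b hb
        obtain ⟨i, -, rfl⟩ := List.mem_map.mp hb
        exact (ha_pos i).le
      · rw [hl_sum]; linarith
      · rw [hl_sum, hLxt]
        simp only [GSR]
        refine ⟨Or.inl (le_of_eq hx0y), Or.inl ?_, trivial⟩
        rw [hx0y, ← hx1_def]
        linarith
  · -- miner profit
    simp only [List.cons_append, hmap, minerProfit, step, txProfit,
      minerProfit_sellX_append, AP, List.append_eq]
    rw [hx0y, ← hx1_def, hstep2, hl_sum, hLxt, hx0y, ← hx1_def, hstep2, min_eq_left hx1Lx.le]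
    norm_num
    ring
  · -- AP sum
    have hzero : ∀ i, AP (fun x => k / x) (fun y => k / y) f px py Lx Rx x0
        (Tx.sellX (a i)) = 0 := by
      intro i
      have hfa : (1 - f) * a i = g ^ 2 * a i := by rw [hg2]
      have h1 : (0:ℝ) ≤ g - g ^ 2 := by
        have h := mul_nonneg hg0.le h1g.le
        linarith only [h]
      have hle : x0 + (1 - f) * a i ≤ Rx := by
        rw [hRxv]
        linarith only [hfa, mul_nonneg h1 (ha_pos i).le,
          mul_nonneg hg0.le (sub_nonneg.mpr (ha_le i))]
      simp only [AP]
      rw [max_eq_right hle]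
      simp
    simp only [List.map_append, List.map_cons, List.map_nil, List.sum_append,
      List.sum_cons, List.sum_nil, List.map_ofFn, List.sum_ofFn, Function.comp]
    rw [Finset.sum_congr rfl (fun i _ => hzero i)]
    simp
    ring
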